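/- For every integer j ≥ 0, the iterated commutator ad_{B₃}^{2j+1}(A) equals (−1)^j (ℓ+1) 2^{2j+1} Σ_{m=−ℓ}^{ℓ} p_{ℓ,m}^{2j+1} E_{(ℓ,m),(ℓ+1,m)}, where ad_X(Y) = [X,Y] = XY − YX and ad_X^{k+1}(Y) = [X, ad_X^k(Y)]. -/

import Mathlib

open Matrix

/-- The index set `J_ℓ = {(j,k) : j ∈ {ℓ, ℓ+1}, -j ≤ k ≤ j}`. -/
noncomputable def Jset (l : ℕ) : Finset (ℤ × ℤ) :=
  (({(l : ℤ), (l : ℤ) + 1} : Finset ℤ) ×ˢ Finset.Icc (-((l : ℤ) + 1)) ((l : ℤ) + 1)).filter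
    fun x => -x.1 ≤ x.2 ∧ x.2 ≤ x.1

/-- The space of complex matrices indexed by `J_ℓ`. -/
abbrev Mat (l : ℕ) := Matrix (Jset l) (Jset l) ℂ

/-- `e_{a,b}`: matrix with a single entry `1` at position `(a,b)`. -/
def eM (l : ℕ) (a b : ℤ × ℤ) : Mat l :=
  fun x y => if (x : ℤ × ℤ) = a ∧ (y : ℤ × ℤ) = b then 1 else 0

/-- `E_{a,b} = e_{a,b} - e_{b,a}`. -/
def Em (l : ℕ) (a b : ℤ × ℤ) : Mat l := eM l a b - eM l b a

/-- `F_{a,b} = i e_{a,b} + i e_{b,a}`. -/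
def Fm (l : ℕ) (a b : ℤ × ℤ) : Mat l := Complex.I • eM l a b + Complex.I • eM l b a

/-- `D_{a,b} = i e_{a,a} - i e_{b,b}`. -/
def Dm (l : ℕ) (a b : ℤ × ℤ) : Mat l := Complex.I • eM l a a - Complex.I • eM l b b

/-- `p_{ℓ,m} = -√(((ℓ+1)² - m²)/((2ℓ+1)(2ℓ+3)))`. -/
noncomputable def pc (l : ℕ) (m : ℤ) : ℝ :=
  -Real.sqrt ((((l : ℝ) + 1) ^ 2 - (m : ℝ) ^ 2) / ((2 * (l : ℝ) + 1) * (2 * (l : ℝ) + 3)))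

/-- `q_{ℓ,m} = √(((ℓ-m+2)(ℓ-m+1))/(4(2ℓ+1)(2ℓ+3)))`. -/
noncomputable def qc (l : ℕ) (m : ℤ) : ℝ :=
  Real.sqrt (((l : ℝ) - (m : ℝ) + 2) * ((l : ℝ) - (m : ℝ) + 1) /
    (4 * (2 * (l : ℝ) + 1) * (2 * (l : ℝ) + 3)))

/-- The control potential `B₁`. -/
noncomputable def B1 (l : ℕ) : Mat l :=
  ∑ m ∈ Finset.Icc (-(l : ℤ)) (l : ℤ),
    ((-qc l m) • Fm l ((l : ℤ), m) ((l : ℤ) + 1, m - 1)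
      + qc l (-m) • Fm l ((l : ℤ), m) ((l : ℤ) + 1, m + 1))

/-- The control potential `B₂`. -/
noncomputable def B2 (l : ℕ) : Mat l :=
  ∑ m ∈ Finset.Icc (-(l : ℤ)) (l : ℤ),
    (qc l m • Em l ((l : ℤ), m) ((l : ℤ) + 1, m - 1)
      + qc l (-m) • Em l ((l : ℤ), m) ((l : ℤ) + 1, m + 1))

/-- The control potential `B₃`. -/
noncomputable def B3 (l : ℕ) : Mat l :=
  ∑ m ∈ Finset.Icc (-(l : ℤ)) (l : ℤ), pc l m • Fm l ((l : ℤ), m) ((l : ℤ) + 1, m)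

/-- The (traceless) drift matrix `A`. -/
noncomputable def Am (l : ℕ) : Mat l :=
  (∑ k ∈ Finset.Icc (-(l : ℤ)) (l : ℤ),
      (Complex.I * (2 * (l : ℂ) + 3) / 2) • eM l ((l : ℤ), k) ((l : ℤ), k))
    + ∑ k ∈ Finset.Icc (-((l : ℤ) + 1)) ((l : ℤ) + 1),
      (-(Complex.I * (2 * (l : ℂ) + 1) / 2)) • eM l ((l : ℤ) + 1, k) ((l : ℤ) + 1, k)


lemma eM_mul (l : ℕ) (a b c d : ℤ × ℤ) :
    eM l a b * eM l c d = if b = c ∧ b ∈ Jset l then eM l a d else 0 := by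
  ext x y
  simp only [Matrix.mul_apply, eM]
  have step : ∀ z : Jset l,
      (if (↑x : ℤ × ℤ) = a ∧ (↑z : ℤ × ℤ) = b then (1:ℂ) else 0) *
        (if (↑z : ℤ × ℤ) = c ∧ (↑y : ℤ × ℤ) = d then 1 else 0)
      = if (↑z : ℤ × ℤ) = b then
          (if b = c ∧ (↑x : ℤ × ℤ) = a ∧ (↑y : ℤ × ℤ) = d then 1 else 0) else 0 := by
    intro z; split_ifs <;> simp_all
  rw [Finset.sum_congr rfl (fun z _ => step z)]
  rw [Finset.sum_coe_sort (Jset l)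
    (fun i => if i = b then (if b = c ∧ (↑x : ℤ × ℤ) = a ∧ (↑y : ℤ × ℤ) = d then (1:ℂ) else 0) else 0)]
  rw [Finset.sum_ite_eq' (Jset l) b]
  by_cases hb : b ∈ Jset l <;> by_cases hbc : b = c <;> simp_all [eM]

lemma mem_Jset_left (l : ℕ) (m : ℤ) (h1 : -(l:ℤ) ≤ m) (h2 : m ≤ l) :
    ((l : ℤ), m) ∈ Jset l := by simp [Jset]; omega

lemma mem_Jset_right (l : ℕ) (m : ℤ) (h1 : -((l:ℤ)+1) ≤ m) (h2 : m ≤ (l:ℤ)+1) :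
    ((l : ℤ)+1, m) ∈ Jset l := by simp [Jset]; omega

lemma my_lie_sum {ι : Type*} {l : ℕ} (x : Mat l) (s : Finset ι) (f : ι → Mat l) :
    ⁅x, ∑ i ∈ s, f i⁆ = ∑ i ∈ s, ⁅x, f i⁆ := by
  simp [Ring.lie_def, Finset.mul_sum, Finset.sum_mul, ← Finset.sum_sub_distrib]

lemma my_sum_lie {ι : Type*} {l : ℕ} (s : Finset ι) (f : ι → Mat l) (x : Mat l) :
    ⁅∑ i ∈ s, f i, x⁆ = ∑ i ∈ s, ⁅f i, x⁆ := by
  simp [Ring.lie_def, Finset.mul_sum, Finset.sum_mul, ← Finset.sum_sub_distrib]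

lemma my_lie_rsmul {l : ℕ} (x : Mat l) (r : ℝ) (y : Mat l) :
    ⁅x, r • y⁆ = r • ⁅x, y⁆ := by
  simp [Ring.lie_def, Matrix.mul_smul, Matrix.smul_mul, smul_sub]

lemma my_rsmul_lie {l : ℕ} (r : ℝ) (x y : Mat l) :
    ⁅r • x, y⁆ = r • ⁅x, y⁆ := by
  simp [Ring.lie_def, Matrix.mul_smul, Matrix.smul_mul, smul_sub]

lemma lie_F_E (l : ℕ) (m' m : ℤ) (h1 : -(l:ℤ) ≤ m) (h2 : m ≤ l) :
    ⁅Fm l ((l:ℤ), m') ((l:ℤ)+1, m'), Em l ((l:ℤ), m) ((l:ℤ)+1, m)⁆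
      = if m' = m then (-2 : ℝ) • Dm l ((l:ℤ), m) ((l:ℤ)+1, m) else 0 := by
  have hne : ((l:ℤ)+1) ≠ (l:ℤ) := by omega
  have hne' : (l:ℤ) ≠ ((l:ℤ)+1) := by omega
  have ha := mem_Jset_left l m h1 h2
  have hb := mem_Jset_right l m (by omega) (by omega)
  rcases eq_or_ne m' m with rfl | hmm
  · simp only [Ring.lie_def, Fm, Em, Dm, if_pos rfl, Matrix.smul_mul, Matrix.mul_smul,
      sub_mul, mul_sub, add_mul, mul_add, eM_mul, Prod.mk.injEq, hne, hne', ha, hb,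
      false_and, if_false, if_true, true_and, and_true, and_self, smul_zero,
      smul_sub, smul_add]
    module
  · simp only [Ring.lie_def, Fm, Em, if_neg hmm, Matrix.smul_mul, Matrix.mul_smul,
      sub_mul, mul_sub, add_mul, mul_add, eM_mul, Prod.mk.injEq, hne, hne', hmm, hmm.symm,
      Ne.symm hmm, false_and, and_false, if_false, smul_zero, sub_zero, zero_sub,
      neg_zero, add_zero, sub_self]

lemma lie_F_D (l : ℕ) (m' m : ℤ) (h1 : -(l:ℤ) ≤ m) (h2 : m ≤ l) :
    ⁅Fm l ((l:ℤ), m') ((l:ℤ)+1, m'), Dm l ((l:ℤ), m) ((l:ℤ)+1, m)⁆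
      = if m' = m then (2 : ℝ) • Em l ((l:ℤ), m) ((l:ℤ)+1, m) else 0 := by
  have hne : ((l:ℤ)+1) ≠ (l:ℤ) := by omega
  have hne' : (l:ℤ) ≠ ((l:ℤ)+1) := by omega
  have ha := mem_Jset_left l m h1 h2
  have hb := mem_Jset_right l m (by omega) (by omega)
  rcases eq_or_ne m' m with rfl | hmm
  · simp only [Ring.lie_def, Fm, Em, Dm, if_pos rfl, Matrix.smul_mul, Matrix.mul_smul,
      sub_mul, mul_sub, add_mul, mul_add, eM_mul, Prod.mk.injEq, hne, hne', ha, hb,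
      false_and, if_false, if_true, true_and, and_true, and_self, smul_zero,
      smul_sub, smul_add, smul_smul, Complex.I_mul_I]
    module
  · simp only [Ring.lie_def, Fm, Dm, if_neg hmm, Matrix.smul_mul, Matrix.mul_smul,
      sub_mul, mul_sub, add_mul, mul_add, eM_mul, Prod.mk.injEq, hne, hne', hmm, hmm.symm,
      Ne.symm hmm, false_and, and_false, if_false, smul_zero, sub_zero, zero_sub,
      neg_zero, add_zero, sub_self, smul_neg, neg_neg]

lemma lie_F_Am (l : ℕ) (m' : ℤ) (h1 : -(l:ℤ) ≤ m') (h2 : m' ≤ l) :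
    ⁅Fm l ((l:ℤ), m') ((l:ℤ)+1, m'), Am l⁆
      = (2*(l:ℝ)+2) • Em l ((l:ℤ), m') ((l:ℤ)+1, m') := by
  have hne : ((l:ℤ)+1) ≠ (l:ℤ) := by omega
  have hne' : (l:ℤ) ≠ ((l:ℤ)+1) := by omega
  have ha := mem_Jset_left l m' h1 h2
  have hb := mem_Jset_right l m' (by omega) (by omega)
  have key : ∀ (k : ℤ),
      ⁅Fm l ((l:ℤ), m') ((l:ℤ)+1, m'), eM l ((l:ℤ), k) ((l:ℤ), k)⁆
        = if k = m' then (Complex.I • eM l ((l:ℤ)+1, m') ((l:ℤ), m')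
            - Complex.I • eM l ((l:ℤ), m') ((l:ℤ)+1, m')) else 0 := by
    intro k
    rcases eq_or_ne k m' with rfl | hk
    · simp only [Ring.lie_def, Fm, Matrix.smul_mul, Matrix.mul_smul, add_mul, mul_add,
        eM_mul, Prod.mk.injEq, hne, hne', ha, if_pos rfl, if_true,
        false_and, if_false, true_and, and_true, and_self, smul_zero, zero_add, add_zero]
    · simp only [Ring.lie_def, Fm, Matrix.smul_mul, Matrix.mul_smul, add_mul, mul_add,
        eM_mul, Prod.mk.injEq, hne, hne', hk, hk.symm, Ne.symm hk,
        false_and, and_false, if_false, smul_zero, zero_add, add_zero, sub_self]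
  have key2 : ∀ (k : ℤ),
      ⁅Fm l ((l:ℤ), m') ((l:ℤ)+1, m'), eM l ((l:ℤ)+1, k) ((l:ℤ)+1, k)⁆
        = if k = m' then (Complex.I • eM l ((l:ℤ), m') ((l:ℤ)+1, m')
            - Complex.I • eM l ((l:ℤ)+1, m') ((l:ℤ), m')) else 0 := by
    intro k
    rcases eq_or_ne k m' with rfl | hk
    · simp only [Ring.lie_def, Fm, Matrix.smul_mul, Matrix.mul_smul, add_mul, mul_add,
        eM_mul, Prod.mk.injEq, hne, hne', hb, if_pos rfl, if_true,
        false_and, if_false, true_and, and_true, and_self, smul_zero, zero_add, add_zero]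
    · simp only [Ring.lie_def, Fm, Matrix.smul_mul, Matrix.mul_smul, add_mul, mul_add,
        eM_mul, Prod.mk.injEq, hne, hne', hk, hk.symm, Ne.symm hk,
        false_and, and_false, if_false, smul_zero, zero_add, add_zero, sub_self]
  have hadd : ∀ x y z : Mat l, ⁅x, y + z⁆ = ⁅x, y⁆ + ⁅x, z⁆ := by
    intro x y z; rw [Ring.lie_def, Ring.lie_def, Ring.lie_def, mul_add, add_mul]; abel
  have hsmul : ∀ (c : ℂ) (x y : Mat l), ⁅x, c • y⁆ = c • ⁅x, y⁆ := by
    intro c x y; rw [Ring.lie_def, Ring.lie_def, Matrix.mul_smul, Matrix.smul_mul, smul_sub]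
  rw [Am, hadd, my_lie_sum, my_lie_sum]
  simp only [hsmul, key, key2, smul_ite, smul_zero]
  rw [Finset.sum_ite_eq' (Finset.Icc (-(l:ℤ)) (l:ℤ)) m',
      Finset.sum_ite_eq' (Finset.Icc (-((l:ℤ)+1)) ((l:ℤ)+1)) m']
  rw [if_pos (by simp; omega), if_pos (by simp; omega)]
  rw [Em]
  match_scalars <;> simp [Complex.I_sq, Complex.ext_iff] <;> ring

lemma lie_B3_E (l : ℕ) (m : ℤ) (h1 : -(l:ℤ) ≤ m) (h2 : m ≤ l) :
    ⁅B3 l, Em l ((l:ℤ), m) ((l:ℤ)+1, m)⁆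
      = (-2 * pc l m) • Dm l ((l:ℤ), m) ((l:ℤ)+1, m) := by
  rw [B3, my_sum_lie]
  have step : ∀ m' ∈ Finset.Icc (-(l:ℤ)) (l:ℤ),
      ⁅pc l m' • Fm l ((l:ℤ), m') ((l:ℤ)+1, m'), Em l ((l:ℤ), m) ((l:ℤ)+1, m)⁆
        = if m' = m then pc l m' • ((-2:ℝ) • Dm l ((l:ℤ), m) ((l:ℤ)+1, m)) else 0 := by
    intro m' _
    rw [my_rsmul_lie, lie_F_E l m' m h1 h2]
    split_ifs <;> simp
  rw [Finset.sum_congr rfl step, Finset.sum_ite_eq',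
    if_pos (Finset.mem_Icc.mpr ⟨h1, h2⟩), smul_smul]
  congr 1; ring

lemma lie_B3_D (l : ℕ) (m : ℤ) (h1 : -(l:ℤ) ≤ m) (h2 : m ≤ l) :
    ⁅B3 l, Dm l ((l:ℤ), m) ((l:ℤ)+1, m)⁆
      = (2 * pc l m) • Em l ((l:ℤ), m) ((l:ℤ)+1, m) := by
  rw [B3, my_sum_lie]
  have step : ∀ m' ∈ Finset.Icc (-(l:ℤ)) (l:ℤ),
      ⁅pc l m' • Fm l ((l:ℤ), m') ((l:ℤ)+1, m'), Dm l ((l:ℤ), m) ((l:ℤ)+1, m)⁆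
        = if m' = m then pc l m' • ((2:ℝ) • Em l ((l:ℤ), m) ((l:ℤ)+1, m)) else 0 := by
    intro m' _
    rw [my_rsmul_lie, lie_F_D l m' m h1 h2]
    split_ifs <;> simp
  rw [Finset.sum_congr rfl step, Finset.sum_ite_eq',
    if_pos (Finset.mem_Icc.mpr ⟨h1, h2⟩), smul_smul]
  congr 1; ring

lemma lie_B3_Am (l : ℕ) :
    ⁅B3 l, Am l⁆ = (2*(l:ℝ)+2) • ∑ m ∈ Finset.Icc (-(l:ℤ)) (l:ℤ),
      pc l m • Em l ((l:ℤ), m) ((l:ℤ)+1, m) := by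
  rw [B3, my_sum_lie, Finset.smul_sum]
  apply Finset.sum_congr rfl
  intro m hm
  simp only [Finset.mem_Icc] at hm
  rw [my_rsmul_lie, lie_F_Am l m hm.1 hm.2, smul_comm]

lemma lie_B3_sumE (l : ℕ) (f : ℤ → ℝ) :
    ⁅B3 l, ∑ m ∈ Finset.Icc (-(l:ℤ)) (l:ℤ), f m • Em l ((l:ℤ), m) ((l:ℤ)+1, m)⁆
      = ∑ m ∈ Finset.Icc (-(l:ℤ)) (l:ℤ),
          (f m * (-2 * pc l m)) • Dm l ((l:ℤ), m) ((l:ℤ)+1, m) := by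
  rw [my_lie_sum]
  apply Finset.sum_congr rfl
  intro m hm
  simp only [Finset.mem_Icc] at hm
  rw [my_lie_rsmul, lie_B3_E l m hm.1 hm.2, smul_smul]

lemma lie_B3_sumD (l : ℕ) (g : ℤ → ℝ) :
    ⁅B3 l, ∑ m ∈ Finset.Icc (-(l:ℤ)) (l:ℤ), g m • Dm l ((l:ℤ), m) ((l:ℤ)+1, m)⁆
      = ∑ m ∈ Finset.Icc (-(l:ℤ)) (l:ℤ),
          (g m * (2 * pc l m)) • Em l ((l:ℤ), m) ((l:ℤ)+1, m) := by
  rw [my_lie_sum]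
  apply Finset.sum_congr rfl
  intro m hm
  simp only [Finset.mem_Icc] at hm
  rw [my_lie_rsmul, lie_B3_D l m hm.1 hm.2, smul_smul]


/-- For every `j ≥ 0`,
`ad_{B₃}^{2j+1}(A) = (-1)^j (ℓ+1) 2^{2j+1} ∑_{m=-ℓ}^{ℓ} p_{ℓ,m}^{2j+1} E_{(ℓ,m),(ℓ+1,m)}`. -/
theorem ad_B3_odd_power (l : ℕ) (j : ℕ) :
    (fun Y : Mat l => ⁅B3 l, Y⁆)^[2 * j + 1] (Am l) =
      ((-1 : ℝ) ^ j * ((l : ℝ) + 1) * 2 ^ (2 * j + 1)) •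
        ∑ m ∈ Finset.Icc (-(l : ℤ)) (l : ℤ),
          (pc l m ^ (2 * j + 1)) • Em l ((l : ℤ), m) ((l : ℤ) + 1, m) := by
  induction j with
  | zero =>
    simp only [show 2*0+1 = 1 from rfl, Function.iterate_one]
    rw [lie_B3_Am]
    simp only [pow_one, pow_zero]
    congr 1
    ring
  | succ j ih =>
    rw [show 2*(j+1)+1 = (2*j+1)+1+1 from by ring]
    rw [Function.iterate_succ_apply', Function.iterate_succ_apply', ih]
    show ⁅B3 l, ⁅B3 l, _⁆⁆ = _
    rw [my_lie_rsmul, lie_B3_sumE, my_lie_rsmul, lie_B3_sumD,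
      Finset.smul_sum, Finset.smul_sum]
    apply Finset.sum_congr rfl
    intro m hm
    rw [smul_smul, smul_smul]
    congr 1
    ring
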